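/- Lemma 3.2(g), general mesh: for every α ∈ (0,1), every partition 0 = t_0 < ⋯ < t_N = T, and every 2 ≤ n ≤ N, one has α · P^{n,n}_α ≤ μ_n^α · P^{n,n−1}_α, where μ_n = Δt_n/Δt_{n−1} (equivalently P^{n,n}_α / P^{n,n−1}_α ≤ μ_n^α/α, the denominator being positive). -/

import Mathlib

open Finset

/-- The kernel `k_β(s) = s^(β-1)/Γ(β)`. -/
noncomputable def kker (β s : ℝ) : ℝ := s ^ (β - 1) / Real.Gamma β

/-- The discrete L1 kernels `K^{n,j}_{1-α}`. -/
noncomputable def Kd (α : ℝ) (t : ℕ → ℝ) (n j : ℕ) : ℝ :=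
  (kker (2 - α) (t n - t (j - 1)) - kker (2 - α) (t n - t j)) / (t j - t (j - 1))

/-- The complementary discrete kernels `P^{n,i}_α`, defined by downward recursion. -/
noncomputable def Pd (α : ℝ) (t : ℕ → ℝ) (n i : ℕ) : ℝ :=
  if i = n then 1 / Kd α t n n
  else (1 / Kd α t i i) *
    ∑ j ∈ (Finset.Ioc i n).attach,
      Pd α t n j.1 * (Kd α t j.1 (i + 1) - Kd α t j.1 i)
termination_by n - i
decreasing_by
  have h := Finset.mem_Ioc.mp j.2
  omega

/-- Lemma 3.2(g), general mesh: for `2 ≤ n ≤ N`,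
`α · P^{n,n}_α ≤ μ_n^α · P^{n,n-1}_α` where `μ_n = Δt_n/Δt_{n-1}`
(and the "denominator" `P^{n,n-1}_α` is positive). -/
theorem complementary_kernel_ratio_bound
    (α T : ℝ) (N : ℕ) (t : ℕ → ℝ)
    (hα0 : 0 < α) (hα1 : α < 1) (hT : 0 < T)
    (ht0 : t 0 = 0) (htN : t N = T)
    (hmono : ∀ j, j < N → t j < t (j + 1)) :
    ∀ n, 2 ≤ n → n ≤ N →
      0 < Pd α t n (n - 1) ∧
      α * Pd α t n n ≤
        ((t n - t (n - 1)) / (t (n - 1) - t (n - 2))) ^ α * Pd α t n (n - 1) := by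
  intro n hn2 hnN
  have h1 : n - 1 + 1 = n := by omega
  have h2 : n - 2 + 1 = n - 1 := by omega
  have h3 : n - 1 - 1 = n - 2 := by omega
  have hbt : t (n-1) < t n := by
    have := hmono (n-1) (by omega); rwa [h1] at this
  have hat : t (n-2) < t (n-1) := by
    have := hmono (n-2) (by omega); rwa [h2] at this
  have hγ : 0 < Real.Gamma (2 - α) := Real.Gamma_pos_of_pos (by linarith)
  set γ := Real.Gamma (2 - α) with hγdef
  set a := t (n-1) - t (n-2) with hadef
  set b := t n - t (n-1) with hbdef
  have ha0 : 0 < a := sub_pos.mpr hat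
  have hb0 : 0 < b := sub_pos.mpr hbt
  have hab : t n - t (n-2) = a + b := by rw [hadef, hbdef]; ring
  clear_value γ a b
  have e1 : (2:ℝ) - α - 1 = 1 - α := by ring
  have h1α : (0:ℝ) < 1 - α := by linarith
  -- kernel values
  have hk0 : kker (2-α) 0 = 0 := by
    rw [kker, e1, Real.zero_rpow (by linarith : (1:ℝ) - α ≠ 0), zero_div]
  have hKnn : Kd α t n n = b ^ (1-α) / γ / b := by
    rw [Kd, sub_self, hk0, sub_zero, ← hbdef, kker, e1, ← hγdef]
  have hKm : Kd α t (n-1) (n-1) = a ^ (1-α) / γ / a := by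
    rw [Kd, h3, sub_self, hk0, sub_zero, ← hadef, kker, e1, ← hγdef]
  have hKnm : Kd α t n (n-1) = ((a+b) ^ (1-α) / γ - b ^ (1-α) / γ) / a := by
    rw [Kd, h3, hab, ← hbdef, ← hadef, kker, kker, e1, ← hγdef]
  -- P values
  have hPnn : Pd α t n n = 1 / Kd α t n n := by rw [Pd, if_pos rfl]
  have hIoc : Finset.Ioc (n-1) n = {n} := by
    ext x; simp only [Finset.mem_Ioc, Finset.mem_singleton]; omega
  have hPnm : Pd α t n (n-1) =
      (1 / Kd α t (n-1) (n-1)) *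
        (Pd α t n n * (Kd α t n n - Kd α t n (n-1))) := by
    rw [Pd, if_neg (by omega)]
    congr 1
    rw [Finset.sum_attach (Finset.Ioc (n-1) n)
      (fun j => Pd α t n j * (Kd α t j (n-1+1) - Kd α t j (n-1)))]
    rw [hIoc, Finset.sum_singleton, h1]
  -- positive atoms
  have hA : (0:ℝ) < a ^ α := Real.rpow_pos_of_pos ha0 _
  have hA' : (0:ℝ) < a ^ (1-α) := Real.rpow_pos_of_pos ha0 _
  have hB : (0:ℝ) < b ^ α := Real.rpow_pos_of_pos hb0 _
  have hB' : (0:ℝ) < b ^ (1-α) := Real.rpow_pos_of_pos hb0 _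
  have hC : (0:ℝ) < (a+b) ^ (1-α) := Real.rpow_pos_of_pos (by linarith) _
  have hAA' : a ^ α * a ^ (1-α) = a := by
    rw [← Real.rpow_add ha0]; norm_num
  have hBB' : b ^ α * b ^ (1-α) = b := by
    rw [← Real.rpow_add hb0]; norm_num
  -- key AM-GM inequality
  have key : b ^ α * (a+b) ^ (1-α) ≤ a + b - α * a := by
    have := Real.geom_mean_le_arith_mean2_weighted hα0.le h1α.le hb0.le
      (by linarith : (0:ℝ) ≤ a + b) (by ring : α + (1 - α) = 1)
    linarith [this]
  -- K^{n,n} - K^{n,n-1} positive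
  have hdiff : Kd α t n n - Kd α t n (n-1)
      = ((a+b) * b^(1-α) - b * (a+b)^(1-α)) / (γ * a * b) := by
    rw [hKnn, hKnm]
    first
    | (field_simp; ring)
    | field_simp
  have hlt : b * (a+b)^(1-α) < (a+b) * b^(1-α) := by
    have h4 : b^(1-α) * (b ^ α * (a+b) ^ (1-α)) ≤ b^(1-α) * (a + b - α * a) :=
      mul_le_mul_of_nonneg_left key hB'.le
    have h5 : b^(1-α) * (b^α * (a+b)^(1-α)) = b * (a+b)^(1-α) := by
      rw [show b^(1-α) * (b^α * (a+b)^(1-α)) = (b^α * b^(1-α)) * (a+b)^(1-α) by ring, hBB']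
    linarith [h4, h5, mul_pos (mul_pos hα0 ha0) hB']
  have hdpos : 0 < Kd α t n n - Kd α t n (n-1) := by
    rw [hdiff]
    exact div_pos (by linarith) (by positivity)
  have hKnn0 : 0 < Kd α t n n := by rw [hKnn]; positivity
  have hKm0 : 0 < Kd α t (n-1) (n-1) := by rw [hKm]; positivity
  -- main kernel-level inequality
  have main : α * Kd α t (n-1) (n-1)
      ≤ (b/a) ^ α * (Kd α t n n - Kd α t n (n-1)) := by
    rw [hKm, hdiff, Real.div_rpow hb0.le ha0.le]
    rw [show α * (a^(1-α)/γ/a) = (α * a^(1-α)) / (γ * a) by ring]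
    rw [show b^α / a^α * (((a+b) * b^(1-α) - b * (a+b)^(1-α)) / (γ * a * b))
        = (b^α * ((a+b) * b^(1-α) - b * (a+b)^(1-α))) / (a^α * (γ * a * b)) by ring]
    rw [div_le_div_iff₀ (by positivity) (by positivity)]
    have lhs : α * a^(1-α) * (a^α * (γ * a * b)) = α * a * (γ * a * b) := by
      rw [show α * a^(1-α) * (a^α * (γ * a * b))
          = (a^α * a^(1-α)) * (α * (γ * a * b)) by ring, hAA']; ring
    have rhs : b^α * ((a+b) * b^(1-α) - b * (a+b)^(1-α)) * (γ * a)
        = (γ * a) * ((a+b) * b - b * (b^α * (a+b)^(1-α))) := by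
      rw [show b^α * ((a+b) * b^(1-α) - b * (a+b)^(1-α)) * (γ * a)
          = (γ * a) * ((a+b) * (b^α * b^(1-α)) - b * (b^α * (a+b)^(1-α))) by ring, hBB']
    rw [lhs, rhs]
    linarith [mul_le_mul_of_nonneg_left key (show (0:ℝ) ≤ γ * a * b by positivity)]
  constructor
  · rw [hPnm, hPnn]
    positivity
  · rw [hPnm, hPnn]
    have rearr : (b/a) ^ α * (1 / Kd α t (n-1) (n-1) * (1 / Kd α t n n *
        (Kd α t n n - Kd α t n (n-1))))
        = ((b/a) ^ α * (Kd α t n n - Kd α t n (n-1)))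
          / (Kd α t (n-1) (n-1) * Kd α t n n) := by
      first
      | (field_simp; ring)
      | field_simp
    rw [rearr, mul_one_div, div_le_div_iff₀ hKnn0 (mul_pos hKm0 hKnn0)]
    linarith [mul_le_mul_of_nonneg_right main hKnn0.le]
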